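/- The algebra μ₃' with basis {e₁,…,e_{n-2k-1}, f₁,…,f_{2k}} and non-zero products [eᵢ,e₁] = e_{i+1} for 2 ≤ i ≤ n-2k-1 and [e₂,f_j] = f_{k+j} for 1 ≤ j ≤ k, is a nilpotent Leibniz algebra. -/
import Mathlib


noncomputable section

open Finset

/-- Underlying space of `μ₃'`: basis `e₁,…,e_{n-2k-1}` (left) and `f₁,…,f_{2k}` (right). -/
abbrev Lmu3 (n k : ℕ) := (Fin (n - 2 * k - 1) ⊕ Fin (2 * k)) → ℂ

/-- `1`-indexed basis vector `eᵢ` (zero when `i` is out of range). -/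
def Eb (n k : ℕ) (i : ℕ) : Lmu3 n k := fun s =>
  match s with
  | .inl a => if (a : ℕ) + 1 = i then 1 else 0
  | .inr _ => 0

/-- `1`-indexed basis vector `fⱼ` (zero when `j` is out of range). -/
def Fb (n k : ℕ) (j : ℕ) : Lmu3 n k := fun s =>
  match s with
  | .inl _ => 0
  | .inr a => if (a : ℕ) + 1 = j then 1 else 0

/-- Structure constants of `μ₃'`: `[eᵢ,e₁] = e_{i+1}` (2 ≤ i ≤ n-2k-1),
`[e₂,fⱼ] = f_{k+j}` (1 ≤ j ≤ k), all other products of basis vectors vanish. -/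
def cμ3 (n k : ℕ) :
    (Fin (n - 2 * k - 1) ⊕ Fin (2 * k)) → (Fin (n - 2 * k - 1) ⊕ Fin (2 * k)) → Lmu3 n k
  | .inl a, .inl b => if (b : ℕ) = 0 ∧ 1 ≤ (a : ℕ) then Eb n k ((a : ℕ) + 2) else 0
  | .inl a, .inr b => if (a : ℕ) = 1 ∧ (b : ℕ) < k then Fb n k ((b : ℕ) + 1 + k) else 0
  | _, _ => 0

/-- Bracket of `μ₃'`. -/
def brkμ3 (n k : ℕ) (x y : Lmu3 n k) : Lmu3 n k :=
  ∑ i : Fin (n - 2 * k - 1) ⊕ Fin (2 * k), ∑ j : Fin (n - 2 * k - 1) ⊕ Fin (2 * k),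
    (x i * y j) • cμ3 n k i j

/-- Left-normed iterated bracket in `μ₃'`. -/
def iterμ3 (n k : ℕ) : ℕ → (ℕ → Lmu3 n k) → Lmu3 n k
  | 0, x => x 0
  | m + 1, x => brkμ3 n k (iterμ3 n k m x) (x (m + 1))


lemma brk_inl (n k : ℕ) (hN : 0 < n - 2*k - 1) (x y : Lmu3 n k) (c : Fin (n - 2*k - 1)) :
    brkμ3 n k x y (.inl c)
      = if h : 2 ≤ (c : ℕ) then
          x (.inl ⟨(c:ℕ) - 1, by omega⟩) * y (.inl ⟨0, hN⟩) else 0 := by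
  have hc := c.isLt
  simp only [brkμ3, Finset.sum_apply, Pi.smul_apply, smul_eq_mul]
  by_cases h : 2 ≤ (c : ℕ)
  · rw [dif_pos h]
    rw [Fintype.sum_eq_single (Sum.inl (⟨(c:ℕ) - 1, by omega⟩ : Fin (n - 2*k-1)))]
    · rw [Fintype.sum_eq_single (Sum.inl (⟨0, hN⟩ : Fin (n - 2*k-1)))]
      · simp only [cμ3]
        rw [if_pos (by refine ⟨trivial, ?_⟩; show 1 ≤ (c:ℕ) - 1; omega)]
        simp only [Eb]
        rw [if_pos (show (c:ℕ) + 1 = (c:ℕ) - 1 + 2 by omega)]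
        ring
      · rintro (b | b) hb
        · simp only [cμ3]
          rw [if_neg]
          · simp
          · rintro ⟨h0, -⟩
            exact hb (by exact congrArg Sum.inl (Fin.ext h0))
        · simp only [cμ3]
          split_ifs with hh
          · simp [Fb]
          · simp
    · rintro (a | a) ha
      · apply Finset.sum_eq_zero
        rintro (b | b) -
        · simp only [cμ3]
          split_ifs with hh
          · simp only [Eb]
            rw [if_neg]
            · simp
            · intro he
              exact ha (congrArg Sum.inl (Fin.ext (show (a:ℕ) = (c:ℕ) - 1 by omega)))
          · simp
        · simp only [cμ3]
          split_ifs with hh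
          · simp [Fb]
          · simp
      · apply Finset.sum_eq_zero
        rintro (b | b) - <;> simp [cμ3]
  · rw [dif_neg h]
    apply Finset.sum_eq_zero
    rintro (a | a) -
    · apply Finset.sum_eq_zero
      rintro (b | b) -
      · simp only [cμ3]
        split_ifs with hh
        · simp only [Eb]
          rw [if_neg (by omega)]
          simp
        · simp
      · simp only [cμ3]
        split_ifs with hh
        · simp [Fb]
        · simp
    · apply Finset.sum_eq_zero
      rintro (b | b) - <;> simp [cμ3]

lemma brk_inr (n k : ℕ) (h1 : 1 < n - 2*k - 1) (x y : Lmu3 n k) (b : Fin (2*k)) :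
    brkμ3 n k x y (.inr b)
      = if h : k ≤ (b : ℕ) then
          x (.inl ⟨1, h1⟩) * y (.inr ⟨(b:ℕ) - k, by have := b.isLt; omega⟩) else 0 := by
  have hb := b.isLt
  simp only [brkμ3, Finset.sum_apply, Pi.smul_apply, smul_eq_mul]
  by_cases h : k ≤ (b : ℕ)
  · rw [dif_pos h]
    rw [Fintype.sum_eq_single (Sum.inl (⟨1, h1⟩ : Fin (n - 2*k-1)))]
    · rw [Fintype.sum_eq_single (Sum.inr (⟨(b:ℕ) - k, by omega⟩ : Fin (2*k)))]
      · simp only [cμ3]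
        rw [if_pos (by refine ⟨trivial, ?_⟩; show (b:ℕ) - k < k; omega)]
        simp only [Fb]
        rw [if_pos (show (b:ℕ) + 1 = (b:ℕ) - k + 1 + k by omega)]
        ring
      · rintro (c | c) hc
        · simp only [cμ3]
          split_ifs with hh
          · simp [Eb]
          · simp
        · simp only [cμ3]
          split_ifs with hh
          · simp only [Fb]
            rw [if_neg]
            · simp
            · intro he
              exact hc (congrArg Sum.inr (Fin.ext (show (c:ℕ) = (b:ℕ) - k by omega)))
          · simp
    · rintro (a | a) ha
      · apply Finset.sum_eq_zero
        rintro (c | c) -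
        · simp only [cμ3]
          split_ifs with hh
          · simp [Eb]
          · simp
        · simp only [cμ3]
          split_ifs with hh
          · simp only [Fb]
            rw [if_neg]
            · simp
            · intro he
              exact ha (congrArg Sum.inl (Fin.ext (show (a:ℕ) = 1 from hh.1)))
          · simp
      · apply Finset.sum_eq_zero
        rintro (c | c) - <;> simp [cμ3]
  · rw [dif_neg h]
    apply Finset.sum_eq_zero
    rintro (a | a) -
    · apply Finset.sum_eq_zero
      rintro (c | c) -
      · simp only [cμ3]
        split_ifs with hh
        · simp [Eb]
        · simp
      · simp only [cμ3]
        split_ifs with hh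
        · simp only [Fb]
          rw [if_neg (by omega)]
          simp
        · simp
    · apply Finset.sum_eq_zero
      rintro (c | c) - <;> simp [cμ3]

/-- `μ₃'` is a nilpotent Leibniz algebra: it satisfies the Leibniz identity and
its lower central series vanishes (equivalently all sufficiently long left-normed
products vanish). -/
theorem mu3prime_nilpotent_Leibniz (n k : ℕ) (hk : 1 ≤ k) (hn : 2 * k + 4 ≤ n) :
    (∀ x y z : Lmu3 n k,
      brkμ3 n k x (brkμ3 n k y z)
        = brkμ3 n k (brkμ3 n k x y) z - brkμ3 n k (brkμ3 n k x z) y) ∧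
    (∃ m : ℕ, ∀ x : ℕ → Lmu3 n k, iterμ3 n k m x = 0) := by
  have hN : 0 < n - 2*k - 1 := by omega
  have h1 : 1 < n - 2*k - 1 := by omega
  constructor
  · intro x y z
    funext s
    rcases s with c | b
    · have hc := c.isLt
      simp only [Pi.sub_apply, brk_inl n k hN, brk_inr n k h1]
      split_ifs
      all_goals (try (exfalso; omega))
      all_goals ring
    · have hb := b.isLt
      simp only [Pi.sub_apply, brk_inl n k hN, brk_inr n k h1]
      split_ifs
      all_goals (try (exfalso; omega))
      all_goals ring
  · refine ⟨n + 2, ?_⟩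
    have key : ∀ j (x : ℕ → Lmu3 n k),
        (∀ c : Fin (n - 2*k - 1), (c:ℕ) < j + 2 → iterμ3 n k (j + 2) x (.inl c) = 0) ∧
        (∀ b : Fin (2*k), iterμ3 n k (j + 2) x (.inr b) = 0) := by
      intro j
      induction j with
      | zero =>
        intro x
        constructor
        · intro c hc
          show brkμ3 n k _ _ (.inl c) = 0
          rw [brk_inl n k hN, dif_neg (by omega)]
        · intro b
          show brkμ3 n k (brkμ3 n k (x 0) (x 1)) (x 2) (.inr b) = 0
          rw [brk_inr n k h1]
          split_ifs with h
          · rw [brk_inl n k hN, dif_neg]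
            · ring
            · simp
          · rfl
      | succ j ih =>
        intro x
        constructor
        · intro c hc
          show brkμ3 n k (iterμ3 n k (j + 2) x) (x (j + 3)) (.inl c) = 0
          rw [brk_inl n k hN]
          split_ifs with h
          · rw [mul_eq_zero]
            left
            apply (ih x).1
            simp
            omega
          · rfl
        · intro b
          show brkμ3 n k (iterμ3 n k (j + 2) x) (x (j + 3)) (.inr b) = 0
          rw [brk_inr n k h1]
          split_ifs with h
          · rw [mul_eq_zero]
            left
            apply (ih x).1
            simp
          · rfl
    intro x
    funext s
    rcases s with c | b
    · have hcc := c.isLt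
      have := (key n x).1 c (by omega)
      simpa using this
    · simpa using (key n x).2 b


end
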